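/- If L is β-smooth, then the SAM one-step perturbation δ* = ρ·∇L(θ)/‖∇L(θ)‖ is near-optimal for the inner maximization: max_{‖δ‖₂ ≤ ρ} L(θ + δ) − L(θ + δ*) ≤ β·ρ². -/

import Mathlib

open scoped Gradient
open InnerProductSpace intervalIntegral MeasureTheory

local notation "⟪" x ", " y "⟫" => @inner ℝ _ _ x y

lemma sam_descent {n : ℕ} (L : EuclideanSpace ℝ (Fin n) → ℝ) (β : ℝ) (hβ : 0 ≤ β)
    (hdiff : Differentiable ℝ L)
    (hsmooth : ∀ x y : EuclideanSpace ℝ (Fin n), ‖∇ L x - ∇ L y‖ ≤ β * ‖x - y‖)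
    (x v : EuclideanSpace ℝ (Fin n)) :
    |L (x + v) - L x - ⟪∇ L x, v⟫| ≤ β / 2 * ‖v‖ ^ 2 := by
  have hcont : Continuous (∇ L) := by
    have : LipschitzWith (Real.toNNReal β) (∇ L) := by
      apply LipschitzWith.of_dist_le_mul
      intro a b
      simpa [dist_eq_norm, Real.coe_toNNReal _ hβ] using hsmooth a b
    exact this.continuous
  have hline : ∀ t : ℝ, HasDerivAt (fun t : ℝ => x + t • v) v t := fun t => by
    simpa using ((hasDerivAt_id t).smul_const v).const_add x
  have hφ : ∀ t : ℝ, HasDerivAt (fun t : ℝ => L (x + t • v)) ⟪∇ L (x + t • v), v⟫ t := by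
    intro t
    have hg : HasFDerivAt L (toDual ℝ _ (∇ L (x + t • v))) (x + t • v) :=
      (hdiff _).hasGradientAt.hasFDerivAt
    exact hg.comp_hasDerivAt t (hline t)
  have hcont' : Continuous fun t : ℝ => ⟪∇ L (x + t • v), v⟫ :=
    Continuous.inner (hcont.comp (by continuity)) continuous_const
  have hFTC : ∫ t in (0:ℝ)..1, ⟪∇ L (x + t • v), v⟫ = L (x + v) - L x := by
    have := intervalIntegral.integral_eq_sub_of_hasDerivAt (a := (0:ℝ)) (b := 1)
      (fun t _ => hφ t) (hcont'.intervalIntegrable 0 1)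
    simpa using this
  have key : L (x + v) - L x - ⟪∇ L x, v⟫
      = ∫ t in (0:ℝ)..1, (⟪∇ L (x + t • v), v⟫ - ⟪∇ L x, v⟫) := by
    rw [intervalIntegral.integral_sub (hcont'.intervalIntegrable 0 1)
      intervalIntegrable_const, hFTC]
    simp
  rw [key]
  have hbound : ∀ t ∈ Set.Ioc (0:ℝ) 1,
      |⟪∇ L (x + t • v), v⟫ - ⟪∇ L x, v⟫| ≤ β * ‖v‖ ^ 2 * t := by
    intro t ht
    have h2 : ‖∇ L (x + t • v) - ∇ L x‖ ≤ β * (t * ‖v‖) := by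
      simpa [norm_smul, abs_of_nonneg ht.1.le] using hsmooth (x + t • v) x
    calc |⟪∇ L (x + t • v), v⟫ - ⟪∇ L x, v⟫| = |⟪∇ L (x + t • v) - ∇ L x, v⟫| := by
          rw [inner_sub_left]
      _ ≤ ‖∇ L (x + t • v) - ∇ L x‖ * ‖v‖ := abs_real_inner_le_norm _ _
      _ ≤ β * (t * ‖v‖) * ‖v‖ := mul_le_mul_of_nonneg_right h2 (norm_nonneg _)
      _ = β * ‖v‖ ^ 2 * t := by ring
  have hgint : IntervalIntegrable (fun t : ℝ => β * ‖v‖ ^ 2 * t) volume 0 1 :=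
    (continuous_const.mul continuous_id).intervalIntegrable 0 1
  have := intervalIntegral.norm_integral_le_of_norm_le (μ := volume) (a := (0:ℝ)) (b := 1)
    (f := fun t => ⟪∇ L (x + t • v), v⟫ - ⟪∇ L x, v⟫) (g := fun t => β * ‖v‖ ^ 2 * t)
    zero_le_one
    (Filter.Eventually.of_forall fun t ht' => by
      simpa [Real.norm_eq_abs] using hbound t ht') hgint
  calc |∫ t in (0:ℝ)..1, (⟪∇ L (x + t • v), v⟫ - ⟪∇ L x, v⟫)|
      ≤ |∫ t in (0:ℝ)..1, β * ‖v‖ ^ 2 * t| := by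
        have h' : |∫ t in (0:ℝ)..1, (⟪∇ L (x + t • v), v⟫ - ⟪∇ L x, v⟫)|
            ≤ ∫ t in (0:ℝ)..1, β * ‖v‖ ^ 2 * t := by simpa [Real.norm_eq_abs] using this
        exact h'.trans (le_abs_self _)
    _ = β / 2 * ‖v‖ ^ 2 := by
        rw [intervalIntegral.integral_const_mul, integral_id]
        rw [abs_of_nonneg (by positivity)]
        ring


/-- If `L` is `β`-smooth, the SAM one-step perturbation `δ* = (ρ/‖∇L(θ)‖) • ∇L(θ)` is
near-optimal for the inner maximization:
`max_{‖δ‖ ≤ ρ} L(θ + δ) − L(θ + δ*) ≤ β ρ²`. -/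
theorem sam_one_step_near_optimal (n : ℕ) (L : EuclideanSpace ℝ (Fin n) → ℝ) (β : ℝ)
    (hdiff : Differentiable ℝ L)
    (hsmooth : ∀ x y : EuclideanSpace ℝ (Fin n), ‖∇ L x - ∇ L y‖ ≤ β * ‖x - y‖)
    (θ : EuclideanSpace ℝ (Fin n)) (hgrad : ∇ L θ ≠ 0) (ρ : ℝ) (hρ : 0 < ρ) :
    (⨆ δ : Metric.closedBall (0 : EuclideanSpace ℝ (Fin n)) ρ, L (θ + δ)) -
      L (θ + (ρ / ‖∇ L θ‖) • ∇ L θ) ≤ β * ρ ^ 2 := by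
  set g := ∇ L θ with hg
  have hgnorm : (0:ℝ) < ‖g‖ := norm_pos_iff.mpr hgrad
  have hβ : 0 ≤ β := by
    have h := hsmooth θ (θ + g)
    have hne : ‖θ - (θ + g)‖ = ‖g‖ := by simp
    nlinarith [norm_nonneg (∇ L θ - ∇ L (θ + g))]
  have hdesc := sam_descent L β hβ hdiff hsmooth
  -- properties of δ*
  set δs : EuclideanSpace ℝ (Fin n) := (ρ / ‖g‖) • g with hδs
  have hδsnorm : ‖δs‖ = ρ := by
    rw [hδs, norm_smul, Real.norm_eq_abs, abs_of_nonneg (by positivity : (0:ℝ) ≤ ρ / ‖g‖)]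
    field_simp
  have hinner : ⟪g, δs⟫ = ρ * ‖g‖ := by
    rw [hδs, real_inner_smul_right, real_inner_self_eq_norm_sq]
    field_simp
  have hlow : L θ + ρ * ‖g‖ - β / 2 * ρ ^ 2 ≤ L (θ + δs) := by
    have h := hdesc θ δs
    rw [hδsnorm, hinner] at h
    have := abs_le.mp h
    linarith [this.1]
  -- upper bound on each element of the ball
  have hup : ∀ δ : Metric.closedBall (0 : EuclideanSpace ℝ (Fin n)) ρ,
      L (θ + δ) ≤ L θ + ρ * ‖g‖ + β / 2 * ρ ^ 2 := by
    rintro ⟨δ, hδ⟩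
    have hδρ : ‖δ‖ ≤ ρ := by simpa [Metric.mem_closedBall, dist_eq_norm] using hδ
    have h := hdesc θ δ
    have h1 := (abs_le.mp h).2
    have h2 : ⟪g, δ⟫ ≤ ‖g‖ * ρ := by
      calc ⟪g, δ⟫ ≤ ‖g‖ * ‖δ‖ := real_inner_le_norm _ _
        _ ≤ ‖g‖ * ρ := by nlinarith
    have h3 : β / 2 * ‖δ‖ ^ 2 ≤ β / 2 * ρ ^ 2 :=
      mul_le_mul_of_nonneg_left (pow_le_pow_left₀ (norm_nonneg δ) hδρ 2) (by linarith)
    simp only [Subtype.coe_mk]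
    nlinarith
  have hne : Nonempty (Metric.closedBall (0 : EuclideanSpace ℝ (Fin n)) ρ) :=
    ⟨0, by simp [hρ.le]⟩
  have hsup : (⨆ δ : Metric.closedBall (0 : EuclideanSpace ℝ (Fin n)) ρ, L (θ + δ))
      ≤ L θ + ρ * ‖g‖ + β / 2 * ρ ^ 2 := ciSup_le hup
  linarith
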